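/- The number of rules is an inherent statistical feature: fix a finite set of facts F, a finite pool Ω of rules with |Ω| = n, and a query predicate q. For r < n, among the r-element subsets R ⊆ Ω, let p(r) be the fraction for which q is provable from facts F and rules R. Then p is nondecreasing: p(r) ≤ p(r+1) for every r < n; equivalently, |{R ⊆ Ω : |R| = r, q provable from (F, R)}| · C(n, r+1) ≤ |{R ⊆ Ω : |R| = r+1, q provable from (F, R)}| · C(n, r). -/

import Mathlib

/-- Provability of a predicate from facts `F` and definite-clause rules `R`. -/
inductive Provable {V : Type*} (F : Set V) (R : Set (Finset V × V)) : V → Prop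
  | fact (q : V) : q ∈ F → Provable F R q
  | rule (B : Finset V) (h : V) : (B, h) ∈ R → (∀ b ∈ B, Provable F R b) → Provable F R h

theorem Provable.mono {V : Type*} {F : Set V} {R R' : Set (Finset V × V)}
    (hRR : R ⊆ R') {q : V} (h : Provable F R q) : Provable F R' q := by
  induction h with
  | fact q hq => exact .fact q hq
  | rule B h hB _ ih => exact .rule B h (hRR hB) ih

open scoped Classical in
theorem card_filter_coe_powersetCard {V : Type*} (F : Finset V)
    (Ω : Finset (Finset V × V)) (q : V) (k : ℕ) :
    ((Ω.powersetCard k).filter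
        (fun R => Provable (↑F : Set V) (↑R : Set (Finset V × V)) q)).card
    = ((Ω.powersetCard k).filter
        (fun R : Finset (Finset V × V) =>
          Provable (↑F : Set V) (↑R : Set (Finset V × V)) q)).card := by
  have h1 : (Ω.powersetCard k >>= fun a => (pure (↑a : Set (Finset V × V))))
      = (Ω.powersetCard k).image
          ((↑·) : Finset (Finset V × V) → Set (Finset V × V)) :=
    Finset.sup_singleton_apply _ _
  rw [show (do let a ← Ω.powersetCard k; pure (↑a : Set (Finset V × V)))
      = (Ω.powersetCard k).image
          ((↑·) : Finset (Finset V × V) → Set (Finset V × V)) from h1,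
    Finset.filter_image, Finset.card_image_of_injective _ Finset.coe_injective]

open scoped Classical in
theorem num_rules_statistical_feature {V : Type*} [DecidableEq V]
    (F : Finset V) (Ω : Finset (Finset V × V)) (q : V)
    {n : ℕ} (hn : n = Ω.card) :
    ∀ r < n,
      ((Ω.powersetCard r).filter
          (fun R => Provable (↑F : Set V) (↑R : Set (Finset V × V)) q)).card *
          Nat.choose n (r + 1) ≤
        ((Ω.powersetCard (r + 1)).filter
            (fun R => Provable (↑F : Set V) (↑R : Set (Finset V × V)) q)).card *
          Nat.choose n r := by
  intro r hr
  rw [card_filter_coe_powersetCard F Ω q r, card_filter_coe_powersetCard F Ω q (r + 1)]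
  set s : Finset (Finset (Finset V × V)) := (Ω.powersetCard r).filter
      (fun R => Provable (↑F : Set V) (↑R : Set (Finset V × V)) q) with hs
  set t : Finset (Finset (Finset V × V)) := (Ω.powersetCard (r + 1)).filter
      (fun R => Provable (↑F : Set V) (↑R : Set (Finset V × V)) q) with ht
  have key : s.card * (n - r) ≤ t.card * (r + 1) := by
    apply Finset.card_mul_le_card_mul (fun A B => A ⊆ B)
    · intro A hA
      rw [hs, Finset.mem_filter, Finset.mem_powersetCard] at hA
      obtain ⟨⟨hAΩ, hAcard⟩, hAprov⟩ := hA
      -- map x ∈ Ω \ A to insert x A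
      have : (Ω \ A).image (fun x => insert x A) ⊆ t.bipartiteAbove (fun A B => A ⊆ B) A := by
        intro B hB
        rw [Finset.mem_image] at hB
        obtain ⟨x, hx, rfl⟩ := hB
        rw [Finset.mem_sdiff] at hx
        rw [Finset.bipartiteAbove, Finset.mem_filter, ht, Finset.mem_filter,
          Finset.mem_powersetCard]
        refine ⟨⟨⟨?_, ?_⟩, ?_⟩, Finset.subset_insert _ _⟩
        · exact Finset.insert_subset hx.1 hAΩ
        · rw [Finset.card_insert_of_notMem hx.2, hAcard]
        · exact hAprov.mono (by exact_mod_cast Finset.coe_subset.2 (Finset.subset_insert _ _))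
      calc n - r = (Ω \ A).card := by
              rw [Finset.card_sdiff_of_subset hAΩ, hn, hAcard]
        _ = ((Ω \ A).image (fun x => insert x A)).card := by
              rw [Finset.card_image_of_injOn]
              intro x hx y hy hxy
              simp only [Finset.coe_sdiff, Set.mem_diff, Finset.mem_coe] at hx hy
              have : x ∈ insert y A := by
                simp only at hxy
                exact hxy ▸ Finset.mem_insert_self x A
              rcases Finset.mem_insert.1 this with h | h
              · exact h
              · exact absurd h hx.2
        _ ≤ _ := Finset.card_le_card this
    · intro B hB
      rw [ht, Finset.mem_filter, Finset.mem_powersetCard] at hB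
      have hsub : s.bipartiteBelow (fun A B => A ⊆ B) B ⊆ B.powersetCard r := by
        intro A hA
        rw [Finset.bipartiteBelow, Finset.mem_filter, hs, Finset.mem_filter,
          Finset.mem_powersetCard] at hA
        rw [Finset.mem_powersetCard]
        exact ⟨hA.2, hA.1.1.2⟩
      calc (s.bipartiteBelow (fun A B => A ⊆ B) B).card
          ≤ (B.powersetCard r).card := Finset.card_le_card hsub
        _ = Nat.choose (r + 1) r := by rw [Finset.card_powersetCard, hB.1.2]
        _ = r + 1 := Nat.choose_succ_self_right r
  -- arithmetic conclusion
  have hmul : s.card * Nat.choose n (r + 1) * (r + 1) ≤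
      t.card * Nat.choose n r * (r + 1) := by
    calc s.card * Nat.choose n (r + 1) * (r + 1)
        = s.card * (Nat.choose n (r + 1) * (r + 1)) := by ring
      _ = s.card * (Nat.choose n r * (n - r)) := by rw [Nat.choose_succ_right_eq]
      _ = s.card * (n - r) * Nat.choose n r := by ring
      _ ≤ t.card * (r + 1) * Nat.choose n r := Nat.mul_le_mul_right _ key
      _ = t.card * Nat.choose n r * (r + 1) := by ring
  exact Nat.le_of_mul_le_mul_right hmul (Nat.succ_pos r)
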